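/- If the contraction condition ∑_{k=1}^n a_k|d_k|^p < 1 holds for some 1 ≤ p < ∞, then there exists a unique function f ∈ L_p[0,1] satisfying the self-similarity equation G(f) = f. -/

import Mathlib

open MeasureTheory Set Finset
open scoped ENNReal NNReal

/-- The similarity operator `G` on functions on `[0,1]`. -/
noncomputable def simOp (n : ℕ) (a c d β α : ℕ → ℝ) (f : ℝ → ℝ) : ℝ → ℝ := fun x =>
  ∑ k ∈ Finset.range n,
    Set.indicator (Set.Ioo (α k) (α (k + 1)))
      (fun y => β k + c k * ((y - α k) / a k) + d k * f ((y - α k) / a k)) x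

/-- The affine measurable equivalence `t ↦ A t + b` of `ℝ`. -/
noncomputable def affEquiv (A b : ℝ) (hA : A ≠ 0) : ℝ ≃ᵐ ℝ where
  toFun := fun t => A * t + b
  invFun := fun x => (x - b) / A
  left_inv := fun t => by field_simp; ring
  right_inv := fun x => by field_simp; ring
  measurable_toFun := (measurable_id.const_mul A).add_const b
  measurable_invFun := (measurable_id.sub_const b).div_const A

/-- Change of variables for lower integrals under an affine map. -/
lemma lintegral_affine_Ioo {A b : ℝ} (hA : 0 < A) (φ : ℝ → ℝ≥0∞) :
    ∫⁻ x in Set.Ioo b (b + A), φ ((x - b) / A) ∂volume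
      = ENNReal.ofReal A * ∫⁻ t in Set.Ioo (0:ℝ) 1, φ t ∂volume := by
  set e := affEquiv A b hA.ne'
  have hmape : Measure.map (⇑e) (ENNReal.ofReal A • volume) = volume := by
    have h2 : (⇑e) = (fun x : ℝ => x + b) ∘ (fun t : ℝ => A * t) := rfl
    rw [Measure.map_smul, h2,
      ← Measure.map_map (measurable_add_const b) (measurable_const_mul A),
      Real.map_volume_mul_left hA.ne', Measure.map_smul, map_add_right_eq_self,
      smul_smul, ← ENNReal.ofReal_mul hA.le, abs_of_pos (inv_pos.2 hA),
      mul_inv_cancel₀ hA.ne', ENNReal.ofReal_one, one_smul]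
  have hpre : (⇑e) ⁻¹' (Set.Ioo b (b + A)) = Set.Ioo (0:ℝ) 1 := by
    ext t
    simp only [Set.mem_preimage, Set.mem_Ioo, affEquiv, MeasurableEquiv.coe_mk, Equiv.coe_fn_mk, e]
    constructor
    · rintro ⟨h1, h2⟩
      constructor <;> nlinarith
    · rintro ⟨h1, h2⟩
      constructor <;> nlinarith
  have hres : volume.restrict (Set.Ioo b (b + A))
      = Measure.map (⇑e) ((ENNReal.ofReal A • volume).restrict (Set.Ioo (0:ℝ) 1)) := by
    rw [← hpre, ← Measure.restrict_map e.measurable measurableSet_Ioo, hmape]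
  rw [hres, MeasureTheory.lintegral_map_equiv, Measure.restrict_smul, lintegral_smul_measure]
  congr 1
  refine lintegral_congr fun t => ?_
  have ht : ((A * t + b) - b) / A = t := by field_simp; ring
  show φ ((e t - b) / A) = φ t
  have he : e t = A * t + b := rfl
  rw [he, ht]

theorem stmt_2 (n : ℕ) (hn : 1 < n) (a c d β : ℕ → ℝ)
    (ha : ∀ k < n, 0 < a k) (hsum : ∑ k ∈ Finset.range n, a k = 1)
    (p : ℝ) (hp : 1 ≤ p)
    (α : ℕ → ℝ) (hα0 : α 0 = 0) (hα : ∀ k, α (k + 1) = α k + a k)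
    (hcontr : ∑ k ∈ Finset.range n, a k * |d k| ^ p < 1) :
    ∃ f : ℝ → ℝ, Measurable f ∧
      IntegrableOn (fun t => |f t| ^ p) (Set.Ioo 0 1) ∧
      (∀ᵐ x ∂(volume.restrict (Set.Ioo (0:ℝ) 1)), simOp n a c d β α f x = f x) ∧
      ∀ g : ℝ → ℝ, Measurable g →
        IntegrableOn (fun t => |g t| ^ p) (Set.Ioo 0 1) →
        (∀ᵐ x ∂(volume.restrict (Set.Ioo (0:ℝ) 1)), simOp n a c d β α g x = g x) →
        ∀ᵐ x ∂(volume.restrict (Set.Ioo (0:ℝ) 1)), g x = f x := by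
  classical
  have hp0 : 0 < p := lt_of_lt_of_le one_pos hp
  set μ : Measure ℝ := volume.restrict (Set.Ioo (0:ℝ) 1) with hμ
  set P : ℝ≥0∞ := ENNReal.ofReal p with hP
  have hP1 : 1 ≤ P := by
    rw [hP, ← ENNReal.ofReal_one]
    exact ENNReal.ofReal_le_ofReal hp
  haveI : Fact (1 ≤ P) := ⟨hP1⟩
  have hP0 : P ≠ 0 := (lt_of_lt_of_le one_pos hP1).ne'
  have hPtop : P ≠ ∞ := ENNReal.ofReal_ne_top
  have hPtoReal : P.toReal = p := ENNReal.toReal_ofReal hp0.le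
  haveI : IsFiniteMeasure μ := by
    constructor
    rw [hμ, Measure.restrict_apply_univ, Real.volume_Ioo]
    exact ENNReal.ofReal_lt_top
  -- basic facts about α
  have hαk : ∀ k, α k = ∑ i ∈ Finset.range k, a i := by
    intro k
    induction k with
    | zero => simpa using hα0
    | succ k ih => rw [hα, ih, Finset.sum_range_succ]
  have hmono : ∀ {i j : ℕ}, i ≤ j → j ≤ n → α i ≤ α j := by
    intro i j hij hjn
    rw [hαk i, hαk j]
    refine Finset.sum_le_sum_of_subset_of_nonneg (Finset.range_subset_range.2 hij) ?_
    intro l hl _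
    exact (ha l (lt_of_lt_of_le (Finset.mem_range.1 hl) hjn)).le
  have hαn : α n = 1 := by rw [hαk]; exact hsum
  -- pointwise formula on each subinterval
  have hpt : ∀ (f : ℝ → ℝ) (k : ℕ), k < n → ∀ x ∈ Set.Ioo (α k) (α (k+1)),
      simOp n a c d β α f x
        = β k + c k * ((x - α k) / a k) + d k * f ((x - α k) / a k) := by
    intro f k hk x hx
    unfold simOp
    rw [Finset.sum_eq_single_of_mem k (Finset.mem_range.2 hk)]
    · rw [Set.indicator_of_mem hx]
    · intro j hj hjk
      apply Set.indicator_of_notMem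
      rw [Set.mem_Ioo]
      rintro ⟨hx1, hx2⟩
      obtain ⟨hxa, hxb⟩ := hx
      rcases lt_or_gt_of_ne hjk with h | h
      · have h1 : α (j+1) ≤ α k := hmono h (le_of_lt hk)
        linarith
      · have h1 : α (k+1) ≤ α j := hmono h (le_of_lt (Finset.mem_range.1 hj))
        linarith
  -- splitting the integral over (0,1) into subintervals
  have hsplit : ∀ F : ℝ → ℝ≥0∞,
      ∫⁻ x, F x ∂μ
        = ∑ k ∈ Finset.range n, ∫⁻ x in Set.Ioo (α k) (α (k+1)), F x ∂volume := by
    intro F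
    have hUgen : ∀ m, m ≤ n →
        (⋃ k ∈ Finset.range m, Set.Ico (α k) (α (k+1))) = Set.Ico (α 0) (α m) := by
      intro m
      induction m with
      | zero => intro _; simp
      | succ m ih =>
        intro hm
        rw [Finset.range_add_one, Finset.set_biUnion_insert, ih (Nat.le_of_succ_le hm),
          Set.union_comm,
          Set.Ico_union_Ico_eq_Ico (hmono (Nat.zero_le m) (Nat.le_of_succ_le hm))
            (hmono (Nat.le_succ m) hm)]
    have hdisj : Set.PairwiseDisjoint ↑(Finset.range n)
        (fun k => Set.Ico (α k) (α (k+1))) := by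
      intro i hi j hj hij
      simp only [Finset.coe_range, Set.mem_Iio] at hi hj
      refine Set.disjoint_left.2 fun x hxi hxj => ?_
      obtain ⟨hi1, hi2⟩ := hxi
      obtain ⟨hj1, hj2⟩ := hxj
      rcases lt_or_gt_of_ne hij with h | h
      · have : α (i+1) ≤ α j := hmono h (le_of_lt hj)
        linarith
      · have : α (j+1) ≤ α i := hmono h (le_of_lt hi)
        linarith
    have h1 : μ = volume.restrict (Set.Ico (0:ℝ) 1) :=
      Measure.restrict_congr_set Ioo_ae_eq_Ico
    have hU : Set.Ico (0:ℝ) 1 = ⋃ k ∈ Finset.range n, Set.Ico (α k) (α (k+1)) := by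
      rw [hUgen n le_rfl, hα0, hαn]
    rw [h1, hU, lintegral_biUnion_finset hdisj (fun k _ => measurableSet_Ico)]
    refine Finset.sum_congr rfl fun k _ => ?_
    have : volume.restrict (Set.Ioo (α k) (α (k+1)))
        = volume.restrict (Set.Ico (α k) (α (k+1))) :=
      Measure.restrict_congr_set Ioo_ae_eq_Ico
    rw [this]
  -- the key integral identity
  have key : ∀ f g : ℝ → ℝ,
      ∫⁻ x, ((‖simOp n a c d β α f x - simOp n a c d β α g x‖₊ : ℝ≥0∞)) ^ p ∂μ
        = ENNReal.ofReal (∑ k ∈ Finset.range n, a k * |d k| ^ p)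
            * ∫⁻ t, ((‖f t - g t‖₊ : ℝ≥0∞)) ^ p ∂μ := by
    intro f g
    have hterm : ∀ k ∈ Finset.range n,
        (∫⁻ x in Set.Ioo (α k) (α (k+1)),
            ((‖simOp n a c d β α f x - simOp n a c d β α g x‖₊ : ℝ≥0∞)) ^ p ∂volume)
          = ENNReal.ofReal (a k * |d k| ^ p)
              * ∫⁻ t, ((‖f t - g t‖₊ : ℝ≥0∞)) ^ p ∂μ := by
      intro k hk
      rw [Finset.mem_range] at hk
      have hcongr : ∫⁻ x in Set.Ioo (α k) (α (k+1)),
            ((‖simOp n a c d β α f x - simOp n a c d β α g x‖₊ : ℝ≥0∞)) ^ p ∂volume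
          = ∫⁻ x in Set.Ioo (α k) (α (k+1)),
            ((‖d k * (f ((x - α k) / a k) - g ((x - α k) / a k))‖₊ : ℝ≥0∞)) ^ p ∂volume := by
        refine lintegral_congr_ae ?_
        refine (ae_restrict_iff' measurableSet_Ioo).2 (Filter.Eventually.of_forall
          fun x hx => ?_)
        dsimp only
        rw [hpt f k hk x hx, hpt g k hk x hx]
        have : (β k + c k * ((x - α k) / a k) + d k * f ((x - α k) / a k))
            - (β k + c k * ((x - α k) / a k) + d k * g ((x - α k) / a k))
            = d k * (f ((x - α k) / a k) - g ((x - α k) / a k)) := by ring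
        rw [this]
      rw [hcongr, hα k,
        lintegral_affine_Ioo (ha k hk)
          (fun t => ((‖d k * (f t - g t)‖₊ : ℝ≥0∞)) ^ p)]
      have hval : ∀ t : ℝ, ((‖d k * (f t - g t)‖₊ : ℝ≥0∞)) ^ p
          = ENNReal.ofReal (|d k| ^ p) * ((‖f t - g t‖₊ : ℝ≥0∞)) ^ p := by
        intro t
        rw [nnnorm_mul, ENNReal.coe_mul, ENNReal.mul_rpow_of_nonneg _ _ hp0.le]
        congr 1
        rw [← enorm_eq_nnnorm, Real.enorm_eq_ofReal_abs, ← ENNReal.ofReal_rpow_of_nonneg (abs_nonneg _) hp0.le]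
      rw [lintegral_congr fun t => hval t,
        lintegral_const_mul' _ _ ENNReal.ofReal_ne_top, ← mul_assoc,
        ← ENNReal.ofReal_mul (ha k hk).le]
    rw [hsplit, Finset.sum_congr rfl hterm, ← Finset.sum_mul,
      ← ENNReal.ofReal_sum_of_nonneg]
    intro i hi
    exact mul_nonneg (ha i (Finset.mem_range.1 hi)).le (Real.rpow_nonneg (abs_nonneg _) p)
  -- measurability of simOp
  have hsimOp_meas : ∀ f : ℝ → ℝ, Measurable f → Measurable (simOp n a c d β α f) := by
    intro f hf
    unfold simOp
    refine Finset.measurable_sum _ fun k _ => ?_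
    refine Measurable.indicator ?_ measurableSet_Ioo
    refine Measurable.add (Measurable.add measurable_const ?_) ?_
    · exact measurable_const.mul ((measurable_id.sub_const _).div_const _)
    · exact measurable_const.mul (hf.comp ((measurable_id.sub_const _).div_const _))
  -- MemLp preservation
  have hint : ∀ f : ℝ → ℝ, Measurable f → MemLp f P μ →
      MemLp (simOp n a c d β α f) P μ := by
    intro f hf hfP
    have h0 : MemLp (simOp n a c d β α (fun _ => 0)) P μ := by
      refine MemLp.of_bound (hsimOp_meas _ measurable_const).aestronglyMeasurable
        (∑ k ∈ Finset.range n, (|β k| + |c k|)) (Filter.Eventually.of_forall fun x => ?_)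
      unfold simOp
      refine le_trans (norm_sum_le _ _) (Finset.sum_le_sum fun k hk => ?_)
      rw [Finset.mem_range] at hk
      by_cases hx : x ∈ Set.Ioo (α k) (α (k+1))
      · rw [Set.indicator_of_mem hx]
        have hak := ha k hk
        obtain ⟨hx1, hx2⟩ := hx
        rw [hα k] at hx2
        have ht0 : 0 < (x - α k) / a k := div_pos (by linarith) hak
        have ht1 : (x - α k) / a k < 1 := by rw [div_lt_one hak]; linarith
        have h1 : |(x - α k) / a k| ≤ 1 := abs_le.mpr ⟨by linarith, ht1.le⟩
        rw [Real.norm_eq_abs, mul_zero, add_zero]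
        calc |β k + c k * ((x - α k) / a k)|
            ≤ |β k| + |c k * ((x - α k) / a k)| := abs_add_le _ _
          _ = |β k| + |c k| * |(x - α k) / a k| := by rw [abs_mul]
          _ ≤ |β k| + |c k| * 1 :=
              add_le_add_right (mul_le_mul_of_nonneg_left h1 (abs_nonneg _)) _
          _ = |β k| + |c k| := by ring
      · rw [Set.indicator_of_notMem hx, norm_zero]
        positivity
    have hdiff : MemLp
        (fun x => simOp n a c d β α f x - simOp n a c d β α (fun _ => 0) x) P μ := by
      refine ⟨((hsimOp_meas f hf).sub
        (hsimOp_meas _ measurable_const)).aestronglyMeasurable, ?_⟩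
      rw [eLpNorm_eq_lintegral_rpow_enorm_toReal hP0 hPtop, hPtoReal]
      simp only [enorm_eq_nnnorm]
      have hk := key f (fun _ => 0)
      rw [hk]
      refine ENNReal.rpow_lt_top_of_nonneg (by positivity) ?_
      refine (ENNReal.mul_lt_top ENNReal.ofReal_lt_top ?_).ne
      have hf' := hfP.2
      rw [eLpNorm_eq_lintegral_rpow_enorm_toReal hP0 hPtop, hPtoReal,
        ENNReal.rpow_lt_top_iff_of_pos (by positivity : (0:ℝ) < 1/p)] at hf'
      simp only [enorm_eq_nnnorm] at hf'
      have : ∀ t : ℝ, ((‖f t - (fun _ : ℝ => (0:ℝ)) t‖₊ : ℝ≥0∞)) ^ p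
          = ((‖f t‖₊ : ℝ≥0∞)) ^ p := by intro t; simp
      rw [lintegral_congr this]
      exact hf'
    have hrw : simOp n a c d β α f
        = fun x => (simOp n a c d β α f x - simOp n a c d β α (fun _ => 0) x)
            + simOp n a c d β α (fun _ => 0) x := by
      funext x; ring
    rw [hrw]
    exact hdiff.add h0
  -- the operator on Lp
  set T : Lp ℝ P μ → Lp ℝ P μ := fun f =>
    MemLp.toLp (simOp n a c d β α ⇑f)
      (hint ⇑f (Lp.stronglyMeasurable f).measurable (Lp.memLp f)) with hT
  set θ : ℝ := ∑ k ∈ Finset.range n, a k * |d k| ^ p with hθ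
  have hθ0 : 0 ≤ θ :=
    Finset.sum_nonneg fun k hk =>
      mul_nonneg (ha k (Finset.mem_range.1 hk)).le (Real.rpow_nonneg (abs_nonneg _) p)
  set K : ℝ≥0 := Real.toNNReal (θ ^ (1/p)) with hK
  have hKcoe : (K : ℝ) = θ ^ (1/p) := Real.coe_toNNReal _ (Real.rpow_nonneg hθ0 _)
  have hK1 : K < 1 := by
    rw [← NNReal.coe_lt_coe, hKcoe, NNReal.coe_one]
    exact Real.rpow_lt_one hθ0 hcontr (by positivity)
  have hdist : ∀ F G : Lp ℝ P μ, dist (T F) (T G) = K * dist F G := by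
    intro F G
    rw [Lp.dist_def, Lp.dist_def]
    have h1 : (⇑(T F) - ⇑(T G) : ℝ → ℝ)
        =ᵐ[μ] fun x => simOp n a c d β α ⇑F x - simOp n a c d β α ⇑G x := by
      filter_upwards [MemLp.coeFn_toLp
          (hint ⇑F (Lp.stronglyMeasurable F).measurable (Lp.memLp F)),
        MemLp.coeFn_toLp
          (hint ⇑G (Lp.stronglyMeasurable G).measurable (Lp.memLp G))] with x hx1 hx2
      simp only [Pi.sub_apply, hT]
      rw [hx1, hx2]
    rw [eLpNorm_congr_ae h1, eLpNorm_eq_lintegral_rpow_enorm_toReal hP0 hPtop, hPtoReal]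
    simp only [enorm_eq_nnnorm]
    rw [key ⇑F ⇑G, ENNReal.mul_rpow_of_nonneg _ _ (by positivity : (0:ℝ) ≤ 1/p),
      eLpNorm_eq_lintegral_rpow_enorm_toReal hP0 hPtop, hPtoReal, ENNReal.toReal_mul]
    congr 1
    rw [ENNReal.ofReal_rpow_of_nonneg hθ0 (by positivity),
      ENNReal.toReal_ofReal (Real.rpow_nonneg hθ0 _), hKcoe]
  have hcontra : ContractingWith K T :=
    ⟨hK1, LipschitzWith.of_dist_le_mul fun F G => (hdist F G).le⟩
  haveI : Nonempty (Lp ℝ P μ) := ⟨0⟩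
  set f₀ : Lp ℝ P μ := ContractingWith.fixedPoint T hcontra with hf₀
  have hfix : T f₀ = f₀ := hcontra.fixedPoint_isFixedPt
  refine ⟨⇑f₀, (Lp.stronglyMeasurable f₀).measurable, ?_, ?_, ?_⟩
  · -- integrability
    have h := (Lp.memLp f₀).integrable_norm_rpow hP0 hPtop
    rw [hPtoReal] at h
    have : (fun x => ‖(⇑f₀ : ℝ → ℝ) x‖ ^ p) = fun t => |(⇑f₀ : ℝ → ℝ) t| ^ p := by
      funext t; rw [Real.norm_eq_abs]
    rw [this] at h
    exact h
  · -- fixed point equation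
    have h1 : ⇑(T f₀) =ᵐ[μ] simOp n a c d β α ⇑f₀ := MemLp.coeFn_toLp _
    rw [hfix] at h1
    exact h1.symm
  · -- uniqueness
    intro g hg hgint hgfix
    have hnn : ∀ r : ℝ, ((‖r‖₊ : ℝ≥0∞)) ^ p = ((‖|r| ^ p‖₊ : ℝ≥0∞)) := by
      intro r
      rw [← enorm_eq_nnnorm, ← enorm_eq_nnnorm, Real.enorm_eq_ofReal_abs r, Real.enorm_eq_ofReal_abs,
        abs_of_nonneg (Real.rpow_nonneg (abs_nonneg r) p),
        ENNReal.ofReal_rpow_of_nonneg (abs_nonneg r) hp0.le]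
    have hgP : MemLp g P μ := by
      refine ⟨hg.aestronglyMeasurable, ?_⟩
      rw [eLpNorm_eq_lintegral_rpow_enorm_toReal hP0 hPtop, hPtoReal]
      refine ENNReal.rpow_lt_top_of_nonneg (by positivity) ?_
      have h2 := hgint.2
      rw [hasFiniteIntegral_def] at h2
      simp only [enorm_eq_nnnorm] at h2 ⊢
      rw [lintegral_congr fun t => hnn (g t)]
      exact h2.ne
    have hcoe : ⇑(hgP.toLp g) =ᵐ[μ] g := MemLp.coeFn_toLp _
    have hcongr : simOp n a c d β α ⇑(hgP.toLp g) =ᵐ[μ] simOp n a c d β α g := by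
      have h0 : ∫⁻ t, ((‖(⇑(hgP.toLp g) : ℝ → ℝ) t - g t‖₊ : ℝ≥0∞)) ^ p ∂μ = 0 := by
        have hz : (fun t => ((‖(⇑(hgP.toLp g) : ℝ → ℝ) t - g t‖₊ : ℝ≥0∞)) ^ p)
            =ᵐ[μ] fun _ => (0:ℝ≥0∞) := by
          filter_upwards [hcoe] with t ht
          rw [ht, sub_self]
          simp [ENNReal.zero_rpow_of_pos hp0]
        rw [lintegral_congr_ae hz, lintegral_zero]
      have h1 := key ⇑(hgP.toLp g) g
      rw [h0, mul_zero] at h1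
      have hmeasdiff : AEMeasurable
          (fun x => ((‖simOp n a c d β α ⇑(hgP.toLp g) x - simOp n a c d β α g x‖₊ : ℝ≥0∞)) ^ p)
          μ := by
        refine Measurable.aemeasurable ?_
        exact ENNReal.continuous_rpow_const.measurable.comp
          ((hsimOp_meas _ (Lp.stronglyMeasurable _).measurable).sub
            (hsimOp_meas g hg)).nnnorm.coe_nnreal_ennreal
      rw [lintegral_eq_zero_iff' hmeasdiff] at h1
      filter_upwards [h1] with x hx
      rcases ENNReal.rpow_eq_zero_iff.1 hx with ⟨h, _⟩ | ⟨h, _⟩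
      · have h' : ‖simOp n a c d β α ⇑(hgP.toLp g) x - simOp n a c d β α g x‖₊ = 0 := by
          exact_mod_cast h
        exact sub_eq_zero.1 (nnnorm_eq_zero.1 h')
      · exact absurd h (by simp)
    have hfixg : T (hgP.toLp g) = hgP.toLp g := by
      refine Lp.ext ?_
      calc ⇑(T (hgP.toLp g)) =ᵐ[μ] simOp n a c d β α ⇑(hgP.toLp g) := MemLp.coeFn_toLp _
        _ =ᵐ[μ] simOp n a c d β α g := hcongr
        _ =ᵐ[μ] g := hgfix
        _ =ᵐ[μ] ⇑(hgP.toLp g) := hcoe.symm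
    have heq : hgP.toLp g = f₀ := hcontra.fixedPoint_unique hfixg
    calc g =ᵐ[μ] ⇑(hgP.toLp g) := hcoe.symm
      _ =ᵐ[μ] ⇑f₀ := by rw [heq]
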